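/- Let S be a random variable on a finite group G constructed as S = W·Z where W is a random variable on ℤ^k and Z is independent of W, and let S' = W'·Z with W' an independent copy of W (same Z). Then for any subset 𝒲 ⊆ ℤ^k with P(W ∈ 𝒲) > 0: 4 · E_Z[ ‖P(S ∈ · | W ∈ 𝒲, Z) − π_G‖_TV^2 ] ≤ |G| · P(S = S' | W ∈ 𝒲, W' ∈ 𝒲) − 1, where π_G is the uniform distribution on G and the outer expectation is over Z. -/

import Mathlib

open Finset

private lemma key_ineq {G : Type*} [Fintype G] [Nonempty G] (q : G → ℝ)
    (hsum : ∑ g, q g = 1) :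
    4 * ((∑ g, |q g - 1 / (Fintype.card G : ℝ)|) / 2) ^ 2
      ≤ (Fintype.card G : ℝ) * ∑ g, q g ^ 2 - 1 := by
  set n : ℝ := (Fintype.card G : ℝ) with hn
  have hn0 : 0 < n := by
    have := Fintype.card_pos (α := G)
    positivity
  have hCS : (∑ g, |q g - 1 / n|) ^ 2 ≤ n * ∑ g, (q g - 1 / n) ^ 2 := by
    have := Finset.sum_mul_sq_le_sq_mul_sq Finset.univ (fun _ : G => (1 : ℝ))
      (fun g => |q g - 1 / n|)
    simpa [sq_abs, Finset.card_univ, hn] using this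
  have hexp : ∑ g, (q g - 1 / n) ^ 2 = (∑ g, q g ^ 2) - 1 / n := by
    have : ∀ g : G, (q g - 1 / n) ^ 2 = q g ^ 2 - (2 / n) * q g + 1 / n ^ 2 := by
      intro g; field_simp; ring
    rw [Finset.sum_congr rfl fun g _ => this g]
    rw [Finset.sum_add_distrib, Finset.sum_sub_distrib, ← Finset.mul_sum, hsum,
      Finset.sum_const, Finset.card_univ]
    field_simp
    rw [nsmul_eq_mul, ← hn]; field_simp [hn0.ne']; ring
  have h4 : 4 * ((∑ g, |q g - 1 / n|) / 2) ^ 2 = (∑ g, |q g - 1 / n|) ^ 2 := by ring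
  rw [h4]
  calc (∑ g, |q g - 1 / n|) ^ 2 ≤ n * ∑ g, (q g - 1 / n) ^ 2 := hCS
    _ = n * ∑ g, q g ^ 2 - 1 := by rw [hexp]; field_simp

theorem modified_l2_bound
    (G : Type*) [Group G] [Fintype G] [DecidableEq G] (k : ℕ)
    (f : (Fin k → ℤ) → (Fin k → G) → G)
    (p : (Fin k → ℤ) → ℝ) (hp0 : ∀ w, 0 ≤ p w) (hp1 : ∑' w, p w = 1)
    (ζ : (Fin k → G) → ℝ) (hζ0 : ∀ z, 0 ≤ ζ z) (hζ1 : ∑ z, ζ z = 1)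
    (𝒲 : Set (Fin k → ℤ))
    (PW : ℝ) (hPW : PW = ∑' w, 𝒲.indicator p w) (hpos : 0 < PW) :
    4 * ∑ z : Fin k → G, ζ z *
        ((∑ g : G, |(∑' w : Fin k → ℤ,
            𝒲.indicator p w * (if f w z = g then 1 else 0)) / PW
          - 1 / (Fintype.card G : ℝ)|) / 2) ^ 2
      ≤ (Fintype.card G : ℝ) *
          ((∑ z : Fin k → G, ζ z * ∑' w : Fin k → ℤ, ∑' w' : Fin k → ℤ,
              𝒲.indicator p w * 𝒲.indicator p w'
                * (if f w z = f w' z then 1 else 0)) / PW ^ 2)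
        - 1 := by
  set n : ℝ := (Fintype.card G : ℝ) with hn
  -- summability of p and its indicator
  have hpsum : Summable p := by
    by_contra h
    rw [tsum_eq_zero_of_not_summable h] at hp1
    norm_num at hp1
  have hind : Summable (𝒲.indicator p) := hpsum.indicator 𝒲
  have hind0 : ∀ w, 0 ≤ 𝒲.indicator p w := fun w => Set.indicator_nonneg (fun w _ => hp0 w) w
  -- Q z g
  set Q : (Fin k → G) → G → ℝ :=
    fun z g => ∑' w : Fin k → ℤ, 𝒲.indicator p w * (if f w z = g then 1 else 0) with hQ
  have hQsummand : ∀ z g, Summable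
      (fun w => 𝒲.indicator p w * (if f w z = g then 1 else 0)) := by
    intro z g
    apply Summable.of_nonneg_of_le _ _ hind
    · intro w
      exact mul_nonneg (hind0 w) (by split <;> norm_num)
    · intro w
      by_cases h : f w z = g <;> simp [h, hind0 w]
  have hQsum : ∀ z, ∑ g, Q z g = PW := by
    intro z
    rw [hQ]
    rw [← Summable.tsum_finsetSum (fun g _ => hQsummand z g), hPW]
    congr 1
    ext w
    simp [mul_ite, Finset.sum_ite_eq]
  -- double tsum = ∑ g, Q z g ^ 2
  have hD : ∀ z, (∑' w : Fin k → ℤ, ∑' w' : Fin k → ℤ,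
      𝒲.indicator p w * 𝒲.indicator p w' * (if f w z = f w' z then 1 else 0))
      = ∑ g, Q z g ^ 2 := by
    intro z
    have hinner : ∀ w, (∑' w' : Fin k → ℤ,
        𝒲.indicator p w * 𝒲.indicator p w' * (if f w z = f w' z then 1 else 0))
        = 𝒲.indicator p w * Q z (f w z) := by
      intro w
      rw [hQ, ← tsum_mul_left]
      congr 1; ext w'
      rw [mul_assoc]
      congr 2
      simp [eq_comm]
    rw [tsum_congr hinner]
    have hstep : ∀ w, 𝒲.indicator p w * Q z (f w z)
        = ∑ g, (𝒲.indicator p w * (if f w z = g then 1 else 0)) * Q z g := by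
      intro w
      have : ∀ g : G, (𝒲.indicator p w * (if f w z = g then 1 else 0)) * Q z g
          = if f w z = g then 𝒲.indicator p w * Q z g else 0 := by
        intro g; by_cases h : f w z = g <;> simp [h]
      rw [Finset.sum_congr rfl fun g _ => this g, Finset.sum_ite_eq]
      simp
    rw [tsum_congr hstep, Summable.tsum_finsetSum (fun g _ => (hQsummand z g).mul_right _)]
    congr 1; ext g
    rw [tsum_mul_right, sq]
  -- rewrite both sides
  have hPW0 : PW ≠ 0 := ne_of_gt hpos
  have hRHS : n * ((∑ z : Fin k → G, ζ z * ∑' w : Fin k → ℤ, ∑' w' : Fin k → ℤ,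
        𝒲.indicator p w * 𝒲.indicator p w' * (if f w z = f w' z then 1 else 0)) / PW ^ 2) - 1
      = ∑ z : Fin k → G, ζ z * (n * ((∑ g, Q z g ^ 2) / PW ^ 2) - 1) := by
    rw [Finset.sum_congr rfl fun z _ => by rw [hD z]]
    rw [Finset.sum_congr rfl fun z _ => (mul_sub (ζ z) _ 1)]
    rw [Finset.sum_sub_distrib]
    simp only [mul_one, hζ1]
    congr 1
    rw [Finset.sum_div, Finset.mul_sum]
    congr 1; ext z
    ring
  rw [hRHS, Finset.mul_sum]
  apply Finset.sum_le_sum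
  intro z _
  show 4 * (ζ z * ((∑ g : G, |Q z g / PW - 1 / n|) / 2) ^ 2)
      ≤ ζ z * (n * ((∑ g, Q z g ^ 2) / PW ^ 2) - 1)
  rw [show (4:ℝ) * (ζ z * ((∑ g : G, |Q z g / PW - 1 / n|) / 2) ^ 2)
    = ζ z * (4 * ((∑ g, |Q z g / PW - 1 / n|) / 2) ^ 2) by ring]
  apply mul_le_mul_of_nonneg_left _ (hζ0 z)
  have h1 : ∑ g, Q z g / PW = 1 := by
    rw [← Finset.sum_div, hQsum z, div_self hPW0]
  have := key_ineq (fun g => Q z g / PW) h1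
  calc 4 * ((∑ g, |Q z g / PW - 1 / n|) / 2) ^ 2
      ≤ n * ∑ g, (Q z g / PW) ^ 2 - 1 := this
    _ = n * ((∑ g, Q z g ^ 2) / PW ^ 2) - 1 := by
        rw [Finset.sum_div, Finset.sum_congr rfl fun g _ => div_pow (Q z g) PW 2]
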